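/- For any two Hermitian positive definite p×p complex matrices A and B with A ≠ B, one has log det A − log det B > p − tr(A⁻¹B). -/

import Mathlib

open Matrix
open scoped ComplexOrder

variable {n : Type*} [Fintype n] [DecidableEq n]

lemma conj_posDef {B C : Matrix n n ℂ} (hB : B.PosDef) (hC : IsUnit C) :
    (Cᴴ * B * C).PosDef := by
  refine PosDef.of_dotProduct_mulVec_pos (isHermitian_conjTranspose_mul_mul C hB.1) fun x hx => ?_
  have hy : C *ᵥ x ≠ 0 := by
    intro h
    apply hx
    have h2 := congrArg (C⁻¹ *ᵥ ·) h
    simpa [mulVec_mulVec, nonsing_inv_mul _ (isUnit_iff_isUnit_det _ |>.1 hC)] using h2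
  have : star x ⬝ᵥ (Cᴴ * B * C) *ᵥ x = star (C *ᵥ x) ⬝ᵥ B *ᵥ (C *ᵥ x) := by
    rw [mul_assoc, ← mulVec_mulVec, dotProduct_mulVec, star_mulVec, ← mulVec_mulVec]
  rw [this]
  exact hB.dotProduct_mulVec_pos hy

lemma herm_trace {M : Matrix n n ℂ} (hM : M.IsHermitian) :
    M.trace = ∑ i, (hM.eigenvalues i : ℂ) := by
  conv_lhs => rw [hM.spectral_theorem]
  rw [Unitary.conjStarAlgAut_apply, trace_mul_comm, ← mul_assoc, (Matrix.mem_unitaryGroup_iff').mp hM.eigenvectorUnitary.2,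
    one_mul, trace_diagonal]
  rfl

lemma herm_eq_one {M : Matrix n n ℂ} (hM : M.IsHermitian)
    (h : ∀ i, hM.eigenvalues i = 1) : M = 1 := by
  have h1 : (Matrix.diagonal (RCLike.ofReal ∘ hM.eigenvalues) : Matrix n n ℂ) = 1 := by
    have h2 : (RCLike.ofReal ∘ hM.eigenvalues : n → ℂ) = fun _ => 1 := funext fun i => by
      simp [h i]
    rw [h2, diagonal_one]
  conv_lhs => rw [hM.spectral_theorem, h1]
  rw [Unitary.conjStarAlgAut_apply, mul_one, (Matrix.mem_unitaryGroup_iff).mp hM.eigenvectorUnitary.2]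

/-- For Hermitian positive definite `A ≠ B`,
`log det A − log det B > p − tr(A⁻¹B)`. -/
theorem stmt_0 (p : ℕ) (A B : Matrix (Fin p) (Fin p) ℂ)
    (hA : A.PosDef) (hB : B.PosDef) (hAB : A ≠ B) :
    Real.log A.det.re - Real.log B.det.re > (p : ℝ) - ((A⁻¹ * B).trace).re := by
  have hS0 := hA.posSemidef
  set S := (open scoped MatrixOrder in CFC.sqrt A) with hSdef
  have hS : S.PosSemidef := (open scoped MatrixOrder in (CFC.sqrt_nonneg A).posSemidef)
  have hSS : S * S = A := (open scoped MatrixOrder in CFC.sqrt_mul_sqrt_self A hS0.nonneg)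
  have hAdet : (0:ℝ) < A.det.re := by
    have := hA.det_pos
    rw [Complex.lt_def] at this; simpa using this.1
  have hBdet : (0:ℝ) < B.det.re := by
    have := hB.det_pos
    rw [Complex.lt_def] at this; simpa using this.1
  have hAdet' : A.det.im = 0 := by
    have := hA.det_pos; rw [Complex.lt_def] at this; simpa using this.2.symm
  have hBdet' : B.det.im = 0 := by
    have := hB.det_pos; rw [Complex.lt_def] at this; simpa using this.2.symm
  have hAdetne : A.det ≠ 0 := fun h => by simp [h] at hAdet
  have hSdet : IsUnit S.det :=
    isUnit_iff_ne_zero.2 fun h => hAdetne (by rw [← hSS, det_mul, h, mul_zero])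
  have hSu : IsUnit S := (isUnit_iff_isUnit_det _).2 hSdet
  have hSinv : IsUnit S⁻¹ := Matrix.isUnit_nonsing_inv_iff.2 hSu
  have hSinvH : S⁻¹ᴴ = S⁻¹ := (hS.1.inv).eq
  set M := S⁻¹ * B * S⁻¹ with hMdef
  have hM : M.PosDef := by
    have := conj_posDef hB hSinv
    rwa [hSinvH] at this
  -- trace identity
  have hAinv : A⁻¹ = S⁻¹ * S⁻¹ := by rw [← hSS, Matrix.mul_inv_rev]
  have htr : (A⁻¹ * B).trace = M.trace := by
    rw [hAinv, hMdef, mul_assoc, trace_mul_comm]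
  -- det identity
  have hdet : M.det = A.det⁻¹ * B.det := by
    have h2 : S.det * S.det = A.det := by rw [← det_mul, hSS]
    rw [hMdef, det_mul, det_mul, det_nonsing_inv, Ring.inverse_eq_inv', ← h2, mul_inv]
    ring
  set μ := hM.1.eigenvalues with hμ
  have hμpos : ∀ i, 0 < μ i := hM.eigenvalues_pos
  have htrre : M.trace.re = ∑ i, μ i := by
    rw [herm_trace hM.1]
    rw [Complex.re_sum]
    simp
    rfl
  have hdetre : M.det.re = ∏ i, μ i := by
    rw [hM.1.det_eq_prod_eigenvalues]
    norm_cast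
  have hAc : A.det = (A.det.re : ℂ) := Complex.ext (by simp) (by simp [hAdet'])
  have hBc : B.det = (B.det.re : ℂ) := Complex.ext (by simp) (by simp [hBdet'])
  have hdetre2 : M.det.re = B.det.re / A.det.re := by
    rw [hdet, hAc, hBc, ← Complex.ofReal_inv, ← Complex.ofReal_mul, Complex.ofReal_re,
      inv_mul_eq_div]
    simp
  have hlog : Real.log A.det.re - Real.log B.det.re = - ∑ i, Real.log (μ i) := by
    rw [← Real.log_prod (fun i _ => (hμpos i).ne'), ← hdetre, hdetre2,
      Real.log_div hBdet.ne' hAdet.ne']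
    ring
  -- exists eigenvalue ≠ 1
  have hexists : ∃ i, μ i ≠ 1 := by
    by_contra h
    push_neg at h
    have hM1 : M = 1 := herm_eq_one hM.1 h
    apply hAB
    have : S * M * S = S * S := by rw [hM1, mul_one]
    rw [hMdef, ← mul_assoc, ← mul_assoc, Matrix.mul_nonsing_inv _ hSdet, one_mul,
      mul_assoc, Matrix.nonsing_inv_mul _ hSdet, mul_one, hSS] at this
    exact this.symm
  obtain ⟨j, hj⟩ := hexists
  have hkey : ∑ i, (1 + Real.log (μ i)) < ∑ i, μ i := by
    refine Finset.sum_lt_sum ?_ ⟨j, Finset.mem_univ j, ?_⟩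
    · intro i _
      have := Real.log_le_sub_one_of_pos (hμpos i)
      linarith
    · have := Real.log_lt_sub_one_of_pos (hμpos j) hj
      linarith
  rw [gt_iff_lt, htr, htrre, hlog]
  have heq : ∑ i, (1 + Real.log (μ i)) = (p:ℝ) + ∑ i, Real.log (μ i) := by
    rw [Finset.sum_add_distrib]; simp
  rw [heq] at hkey
  linarith
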